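/- Let E and F be nonempty closed convex sets in ℝⁿ such that E + F = ℝⁿ and for every u ∈ ℝⁿ the metric projections p_E(u) and p_F(u) are orthogonal, i.e., p_E(u) · p_F(u) = 0. Then E is not contained in the relative boundary of F°, and F is not contained in the relative boundary of E°. -/

import Mathlib

open RealInnerProductSpace Pointwise

/-- The (negative) polar set of `X`. -/
def polarSet {n : ℕ} (X : Set (EuclideanSpace ℝ (Fin n))) : Set (EuclideanSpace ℝ (Fin n)) :=
  {x | ∀ e ∈ X, ⟪x, e⟫ ≤ 0}

/-- The orthogonal complement of a set `X`. -/
def orthComp {n : ℕ} (X : Set (EuclideanSpace ℝ (Fin n))) : Set (EuclideanSpace ℝ (Fin n)) :=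
  {x | ∀ u ∈ X, ⟪x, u⟫ = 0}

/-- `y` is the metric projection of `u` on `E`: it belongs to `E` and is nearest to `u`. -/
def IsMetricProj {n : ℕ} (E : Set (EuclideanSpace ℝ (Fin n)))
    (u y : EuclideanSpace ℝ (Fin n)) : Prop :=
  y ∈ E ∧ ∀ x ∈ E, ‖u - y‖ ≤ ‖u - x‖

namespace NotSubsetRbdAux

variable {n : ℕ}

/-- If `a * t + b ≥ 0` for all positive `t`, then `a ≥ 0`. -/
lemma nonneg_slope {a b : ℝ} (h : ∀ t : ℝ, 0 < t → 0 ≤ a * t + b) : 0 ≤ a := by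
  by_contra hlt
  push_neg at hlt
  have hna : 0 < -a := by linarith
  have ht : 0 < (|b| + 1) / (-a) := by positivity
  have h2 := h _ ht
  have h3 : a * ((|b| + 1) / (-a)) = -(|b| + 1) := by
    field_simp
    rw [div_self (ne_of_lt hlt)]
  rw [h3] at h2
  have := le_abs_self b
  linarith

/-- Existence of metric projections. -/
lemma proj_ex {E : Set (EuclideanSpace ℝ (Fin n))} (hne : E.Nonempty) (hcl : IsClosed E)
    (hconv : Convex ℝ E) (u : EuclideanSpace ℝ (Fin n)) : ∃ y, IsMetricProj E u y := by
  obtain ⟨v, hvE, hv⟩ := exists_norm_eq_iInf_of_complete_convex hne hcl.isComplete hconv u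
  refine ⟨v, hvE, fun x hx => ?_⟩
  rw [hv]
  exact ciInf_le ⟨0, Set.forall_mem_range.2 fun _ => norm_nonneg _⟩ (⟨x, hx⟩ : E)

/-- Variational characterization of metric projections (forward direction). -/
lemma proj_inner_le {E : Set (EuclideanSpace ℝ (Fin n))} (hconv : Convex ℝ E)
    {u y : EuclideanSpace ℝ (Fin n)} (h : IsMetricProj E u y) :
    ∀ x ∈ E, ⟪u - y, x - y⟫ ≤ 0 := by
  haveI : Nonempty E := ⟨⟨y, h.1⟩⟩
  have key : ‖u - y‖ = ⨅ w : E, ‖u - w‖ := by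
    refine le_antisymm (le_ciInf fun w => h.2 w w.2) ?_
    exact ciInf_le ⟨0, Set.forall_mem_range.2 fun _ => norm_nonneg _⟩ (⟨y, h.1⟩ : E)
  exact (norm_eq_iInf_iff_real_inner_le_zero hconv h.1).1 key

/-- Variational characterization of metric projections (converse direction). -/
lemma isMetricProj_of_inner {E : Set (EuclideanSpace ℝ (Fin n))} {u y : EuclideanSpace ℝ (Fin n)}
    (hy : y ∈ E) (h : ∀ x ∈ E, ⟪u - y, x - y⟫ ≤ 0) : IsMetricProj E u y := by
  refine ⟨hy, fun x hx => ?_⟩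
  have h1 := h x hx
  have key : ‖u - y‖ ^ 2 ≤ ‖u - x‖ ^ 2 := by
    have e1 : u - x = (u - y) - (x - y) := by abel
    rw [e1, norm_sub_sq_real (u - y) (x - y)]
    nlinarith [sq_nonneg ‖x - y‖]
  nlinarith [norm_nonneg (u - y), norm_nonneg (u - x)]

lemma isMetricProj_self {E : Set (EuclideanSpace ℝ (Fin n))} {y : EuclideanSpace ℝ (Fin n)}
    (hy : y ∈ E) : IsMetricProj E y y :=
  ⟨hy, fun x _ => by simp [norm_nonneg]⟩

/-- Key lemma: any vector orthogonal to all of `E` belongs to `F`. -/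
lemma lemW {E F : Set (EuclideanSpace ℝ (Fin n))}
    (hEne : E.Nonempty) (hEcl : IsClosed E) (hEconv : Convex ℝ E)
    (hFne : F.Nonempty) (hFcl : IsClosed F) (hFconv : Convex ℝ F)
    (hsum : E + F = Set.univ)
    (horth : ∀ u y z : EuclideanSpace ℝ (Fin n),
      IsMetricProj E u y → IsMetricProj F u z → ⟪y, z⟫ = 0)
    (h0F : (0 : EuclideanSpace ℝ (Fin n)) ∈ F)
    (hpair : ∀ e ∈ E, ∀ f ∈ F, ⟪e, f⟫ ≤ 0)
    (w : EuclideanSpace ℝ (Fin n)) (hw : ∀ e ∈ E, ⟪w, e⟫ = 0) : w ∈ F := by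
  obtain ⟨fb, hfb⟩ := proj_ex hFne hFcl hFconv w
  have hnormal : ∀ f ∈ F, ⟪w - fb, f - fb⟫ ≤ 0 := proj_inner_le hFconv hfb
  -- the projection of `w` onto `F` is orthogonal to all of `E`
  have hfbE : ∀ x ∈ E, ⟪fb, x⟫ = 0 := by
    intro x hx
    have hle : ⟪fb, x⟫ ≤ 0 := by
      rw [real_inner_comm]; exact hpair x hx fb hfb.1
    have key : ∀ R : ℝ, 0 < R → 0 ≤ 2 * ⟪fb, x⟫ * R + ‖fb - x‖ ^ 2 := by
      intro R hR
      have hPF : IsMetricProj F (fb + R • (w - fb)) fb := by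
        apply isMetricProj_of_inner hfb.1
        intro f hf
        have e1 : fb + R • (w - fb) - fb = R • (w - fb) := by abel
        rw [e1, real_inner_smul_left]
        exact mul_nonpos_of_nonneg_of_nonpos hR.le (hnormal f hf)
      obtain ⟨y, hy⟩ := proj_ex hEne hEcl hEconv (fb + R • (w - fb))
      have hyfb : ⟪y, fb⟫ = 0 := horth _ y fb hy hPF
      have hwy : ⟪y, w⟫ = 0 := by rw [real_inner_comm]; exact hw y hy.1
      have hwx : ⟪x, w⟫ = 0 := by rw [real_inner_comm]; exact hw x hx
      have hmin := hy.2 x hx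
      have hsq : ‖fb + R • (w - fb) - y‖ ^ 2 ≤ ‖fb + R • (w - fb) - x‖ ^ 2 := by
        nlinarith [norm_nonneg (fb + R • (w - fb) - y), norm_nonneg (fb + R • (w - fb) - x)]
      have e1 : fb + R • (w - fb) - y = (fb - y) + R • (w - fb) := by abel
      have e2 : fb + R • (w - fb) - x = (fb - x) + R • (w - fb) := by abel
      rw [e1, e2, norm_add_sq_real, norm_add_sq_real] at hsq
      have j1 : ⟪fb - y, R • (w - fb)⟫ = R * (⟪fb, w⟫ - ⟪fb, fb⟫) := by
        simp only [real_inner_smul_right, inner_sub_left, inner_sub_right]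
        rw [hwy, hyfb]; ring
      have j2 : ⟪fb - x, R • (w - fb)⟫ = R * (⟪fb, w⟫ - ⟪fb, fb⟫ + ⟪x, fb⟫) := by
        simp only [real_inner_smul_right, inner_sub_left, inner_sub_right]
        rw [hwx]; ring
      rw [j1, j2] at hsq
      have hxfb : ⟪x, fb⟫ = ⟪fb, x⟫ := real_inner_comm fb x
      nlinarith [sq_nonneg ‖fb - y‖]
    have h0 := nonneg_slope (a := 2 * ⟪fb, x⟫) (b := ‖fb - x‖ ^ 2) (fun t ht => key t ht)
    linarith
  -- normal component at `fb` is nonnegative against `fb`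
  have hkappa : 0 ≤ ⟪w - fb, fb⟫ := by
    have h := hnormal 0 h0F
    rw [zero_sub, inner_neg_right] at h
    linarith
  have hn0 : w - fb = 0 := by
    have key : ∀ r : ℝ, 0 < r → 0 ≤ -(‖w - fb‖ ^ 2) * r + ⟪w - fb, fb⟫ := by
      intro r hr
      have hmem : r • (w - fb) ∈ E + F := by rw [hsum]; trivial
      obtain ⟨e, he, f, hf, hef⟩ := Set.mem_add.1 hmem
      have h1 : ⟪w - fb, e⟫ = 0 := by
        rw [inner_sub_left, hw e he, hfbE e he]; ring
      have h3 : ⟪w - fb, r • (w - fb)⟫ = r * ‖w - fb‖ ^ 2 := by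
        rw [real_inner_smul_right, real_inner_self_eq_norm_sq]
      have h4 : ⟪w - fb, e⟫ + ⟪w - fb, f⟫ = r * ‖w - fb‖ ^ 2 := by
        rw [← inner_add_right, hef]; exact h3
      have h5 : ⟪w - fb, f⟫ ≤ ⟪w - fb, fb⟫ := by
        have h6 := hnormal f hf
        rw [inner_sub_right] at h6
        linarith
      linarith
    have h0 := nonneg_slope (fun t ht => key t ht)
    have h1 : ‖w - fb‖ ^ 2 ≤ 0 := by linarith
    have h2 : ‖w - fb‖ = 0 := by nlinarith [norm_nonneg (w - fb)]
    exact norm_eq_zero.mp h2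
  have hwfb : w = fb := by rwa [sub_eq_zero] at hn0
  rw [hwfb]; exact hfb.1

-- Main lemma: `E` is not contained in the relative boundary of the polar of `F`.
set_option maxHeartbeats 2000000 in
lemma main {E F : Set (EuclideanSpace ℝ (Fin n))}
    (hEne : E.Nonempty) (hEcl : IsClosed E) (hEconv : Convex ℝ E)
    (hFne : F.Nonempty) (hFcl : IsClosed F) (hFconv : Convex ℝ F)
    (hsum : E + F = Set.univ)
    (horth : ∀ u y z : EuclideanSpace ℝ (Fin n),
      IsMetricProj E u y → IsMetricProj F u z → ⟪y, z⟫ = 0) :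
    ¬ E ⊆ intrinsicFrontier ℝ (polarSet F) := by
  intro hsub
  -- minimum norm point of F
  obtain ⟨z0, hz0⟩ := proj_ex hFne hFcl hFconv 0
  have hB1 : ∀ f ∈ F, ‖z0‖ ^ 2 ≤ ⟪z0, f⟫ := by
    intro f hf
    have h := proj_inner_le hFconv hz0 f hf
    rw [zero_sub, inner_neg_left, inner_sub_right, real_inner_self_eq_norm_sq] at h
    linarith
  -- ⟪z0, e⟫ ≤ 0 for e ∈ E
  have hEz0le : ∀ e ∈ E, ⟪z0, e⟫ ≤ 0 := by
    intro e he
    obtain ⟨z, hz⟩ := proj_ex hFne hFcl hFconv e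
    have hez : ⟪e, z⟫ = 0 := horth e e z (isMetricProj_self he) hz
    have hchar := proj_inner_le hFconv hz z0 hz0.1
    have hzz0 : ⟪z, z0⟫ ≤ ‖z‖ * ‖z0‖ := real_inner_le_norm z z0
    have hminz : ‖z0‖ ≤ ‖z‖ := by
      have h := hz0.2 z hz.1
      rwa [zero_sub, zero_sub, norm_neg, norm_neg] at h
    rw [inner_sub_left, inner_sub_right, inner_sub_right, real_inner_self_eq_norm_sq] at hchar
    rw [real_inner_comm]
    nlinarith [norm_nonneg z, norm_nonneg z0]
  -- ⟪z0, e⟫ ≥ 0 for e ∈ E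
  have hEz0ge : ∀ e ∈ E, 0 ≤ ⟪z0, e⟫ := by
    intro e he
    have key : ∀ t : ℝ, 0 < t → 0 ≤ 2 * ⟪z0, e⟫ * t + ‖e‖ ^ 2 := by
      intro t ht
      have hchar : IsMetricProj F (-(t • z0)) z0 := by
        apply isMetricProj_of_inner hz0.1
        intro f hf
        have hB := hB1 f hf
        have e1 : -(t • z0) - z0 = -((t + 1) • z0) := by
          rw [add_smul, one_smul]; abel
        rw [e1, inner_neg_left, real_inner_smul_left]
        have h2 : 0 ≤ ⟪z0, f - z0⟫ := by
          rw [inner_sub_right, real_inner_self_eq_norm_sq]; linarith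
        nlinarith
      obtain ⟨y, hy⟩ := proj_ex hEne hEcl hEconv (-(t • z0))
      have hyz0 : ⟪y, z0⟫ = 0 := horth _ y z0 hy hchar
      have hmin := hy.2 e he
      have hsq : ‖-(t • z0) - y‖ ^ 2 ≤ ‖-(t • z0) - e‖ ^ 2 := by
        nlinarith [norm_nonneg (-(t • z0) - y), norm_nonneg (-(t • z0) - e)]
      have e1 : ‖-(t • z0) - y‖ = ‖t • z0 + y‖ := by
        rw [show -(t • z0) - y = -(t • z0 + y) by abel, norm_neg]
      have e2 : ‖-(t • z0) - e‖ = ‖t • z0 + e‖ := by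
        rw [show -(t • z0) - e = -(t • z0 + e) by abel, norm_neg]
      rw [e1, e2, norm_add_sq_real, norm_add_sq_real] at hsq
      have j1 : ⟪t • z0, y⟫ = 0 := by
        rw [real_inner_smul_left, real_inner_comm, hyz0, mul_zero]
      have j2 : ⟪t • z0, e⟫ = t * ⟪z0, e⟫ := real_inner_smul_left z0 e t
      rw [j1, j2] at hsq
      nlinarith [sq_nonneg ‖y‖]
    have h0 := nonneg_slope (fun t ht => key t ht)
    linarith
  -- 0 ∈ F
  have h0F : (0 : EuclideanSpace ℝ (Fin n)) ∈ F := by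
    have hmem : (0 : EuclideanSpace ℝ (Fin n)) ∈ E + F := by rw [hsum]; trivial
    obtain ⟨e, he, f, hf, hef⟩ := Set.mem_add.1 hmem
    have h1 : ⟪z0, e⟫ = 0 := le_antisymm (hEz0le e he) (hEz0ge e he)
    have h2 : ‖z0‖ ^ 2 ≤ ⟪z0, f⟫ := hB1 f hf
    have h3 : ⟪z0, e⟫ + ⟪z0, f⟫ = 0 := by
      rw [← inner_add_right, hef, inner_zero_right]
    have h4 : ‖z0‖ ^ 2 ≤ 0 := by linarith
    have h5 : z0 = 0 := by
      have : ‖z0‖ = 0 := by nlinarith [norm_nonneg z0]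
      exact norm_eq_zero.mp this
    rw [← h5]; exact hz0.1
  -- the basic pairing inequality
  have hpair : ∀ e ∈ E, ∀ f ∈ F, ⟪e, f⟫ ≤ 0 := by
    intro e he f hf
    obtain ⟨z, hz⟩ := proj_ex hFne hFcl hFconv e
    have hez : ⟪e, z⟫ = 0 := horth e e z (isMetricProj_self he) hz
    have hmin := hz.2 0 h0F
    rw [sub_zero] at hmin
    have hsq : ‖e - z‖ ^ 2 ≤ ‖e‖ ^ 2 := by
      nlinarith [norm_nonneg (e - z), norm_nonneg e]
    rw [norm_sub_sq_real] at hsq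
    have hz0' : z = 0 := by
      have : ‖z‖ = 0 := by nlinarith [norm_nonneg z]
      exact norm_eq_zero.mp this
    have h := proj_inner_le hFconv hz f hf
    rw [hz0', sub_zero, sub_zero] at h
    exact h
  -- facts about the polar cone K
  set K : Set (EuclideanSpace ℝ (Fin n)) := polarSet F with hK
  have hEK : E ⊆ K := by
    intro e he
    intro f hf
    exact hpair e he f hf
  have h0K : (0 : EuclideanSpace ℝ (Fin n)) ∈ K := by
    intro f _
    rw [inner_zero_left]
  have hKscale : ∀ c : ℝ, 0 ≤ c → ∀ x ∈ K, c • x ∈ K := by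
    intro c hc x hx f hf
    rw [real_inner_smul_left]
    exact mul_nonpos_of_nonneg_of_nonpos hc (hx f hf)
  have hKconv : Convex ℝ K := by
    intro x hx y hy a b ha hb _
    intro f hf
    rw [inner_add_left, real_inner_smul_left, real_inner_smul_left]
    have h1 := mul_nonpos_of_nonneg_of_nonpos ha (hx f hf)
    have h2 := mul_nonpos_of_nonneg_of_nonpos hb (hy f hf)
    linarith
  have hKcl : IsClosed K := by
    have hrw : K = ⋂ f ∈ F, {x : EuclideanSpace ℝ (Fin n) | ⟪x, f⟫ ≤ 0} := by
      ext x
      simp [hK, polarSet, Set.mem_iInter]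
    rw [hrw]
    exact isClosed_biInter fun f _ =>
      isClosed_le (Continuous.inner continuous_id continuous_const) continuous_const
  have hKne : K.Nonempty := ⟨0, h0K⟩
  -- a relative interior point of E
  obtain ⟨xb, hxbi⟩ := Set.Nonempty.intrinsicInterior hEconv hEne
  have hxbE : xb ∈ E := intrinsicInterior_subset hxbi
  have hxbF : xb ∈ intrinsicFrontier ℝ K := hsub hxbE
  obtain ⟨yb, hyb, hybcoe⟩ := mem_intrinsicFrontier.1 hxbF
  have hxbK : xb ∈ K := by
    have h1 : yb ∈ closure ((↑) ⁻¹' K : Set (affineSpan ℝ K)) := hyb.1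
    have h2 := continuous_subtype_val.closure_preimage_subset K h1
    rw [hKcl.closure_eq] at h2
    have h3 : (yb : EuclideanSpace ℝ (Fin n)) ∈ K := h2
    rwa [hybcoe] at h3
  -- points outside K converging to xb, inside the affine span of K
  have hv : ∀ k : ℕ, ∃ v : EuclideanSpace ℝ (Fin n),
      v ∈ (affineSpan ℝ K : Set (EuclideanSpace ℝ (Fin n))) ∧ v ∉ K ∧
      ‖v - xb‖ < 1 / (k + 1) := by
    intro k
    have hnotint : yb ∉ interior ((↑) ⁻¹' K : Set (affineSpan ℝ K)) := hyb.2
    have hpos : (0 : ℝ) < 1 / (k + 1) := by positivity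
    have hnb : ¬ Metric.ball yb (1 / (k + 1)) ⊆ ((↑) ⁻¹' K : Set (affineSpan ℝ K)) := by
      intro hball
      exact hnotint (mem_interior_iff_mem_nhds.2
        (Filter.mem_of_superset (Metric.ball_mem_nhds yb hpos) hball))
    obtain ⟨z, hzball, hzK⟩ := Set.not_subset.1 hnb
    refine ⟨(z : EuclideanSpace ℝ (Fin n)), z.2, hzK, ?_⟩
    have hd : dist z yb < 1 / (k + 1) := Metric.mem_ball.1 hzball
    rw [Subtype.dist_eq, hybcoe, dist_eq_norm] at hd
    exact hd
  choose v hvA hvK hvd using hv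
  have hπex : ∀ k : ℕ, ∃ p, IsMetricProj K (v k) p := fun k => proj_ex hKne hKcl hKconv (v k)
  choose π hπ using hπex
  have hvne : ∀ k, v k - π k ≠ 0 := by
    intro k h
    have : v k = π k := by rwa [sub_eq_zero] at h
    exact hvK k (this ▸ (hπ k).1)
  set sk : ℕ → EuclideanSpace ℝ (Fin n) := fun k => (‖v k - π k‖)⁻¹ • (v k - π k) with hsk
  have hsknorm : ∀ k, ‖sk k‖ = 1 := by
    intro k
    rw [hsk]
    simp only [norm_smul, norm_inv, norm_norm]
    field_simp [norm_eq_zero, hvne k]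
  have hπ0 : ∀ k, ⟪v k - π k, π k⟫ = 0 := by
    intro k
    have c1 := proj_inner_le hKconv (hπ k) 0 h0K
    have c2 := proj_inner_le hKconv (hπ k) ((2 : ℝ) • π k) (hKscale 2 (by norm_num) _ (hπ k).1)
    rw [zero_sub, inner_neg_right] at c1
    have e1 : (2 : ℝ) • π k - π k = π k := by
      rw [two_smul]; abel
    rw [e1] at c2
    linarith
  have hskle : ∀ k, ∀ x ∈ K, ⟪sk k, x⟫ ≤ 0 := by
    intro k x hx
    have h1 := proj_inner_le hKconv (hπ k) x hx
    rw [inner_sub_right, hπ0 k] at h1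
    rw [hsk]
    simp only [real_inner_smul_left]
    exact mul_nonpos_of_nonneg_of_nonpos (inv_nonneg.2 (norm_nonneg _)) (by linarith)
  have hskpi : ∀ k, ⟪sk k, π k⟫ = 0 := by
    intro k
    rw [hsk]
    simp only [real_inner_smul_left]
    rw [hπ0 k, mul_zero]
  have hlip : ∀ k, ‖xb - π k‖ ≤ ‖xb - v k‖ := by
    intro k
    have hchar := proj_inner_le hKconv (hπ k) xb hxbK
    have hcs : ⟪xb - v k, xb - π k⟫ ≤ ‖xb - v k‖ * ‖xb - π k‖ := real_inner_le_norm _ _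
    have hid : ‖xb - π k‖ ^ 2 = ⟪xb - v k, xb - π k⟫ + ⟪v k - π k, xb - π k⟫ := by
      rw [← inner_add_left, show xb - v k + (v k - π k) = xb - π k by abel,
        real_inner_self_eq_norm_sq]
    nlinarith [norm_nonneg (xb - π k), norm_nonneg (xb - v k),
      sq_nonneg (‖xb - π k‖ - ‖xb - v k‖)]
  have hskxb_ub : ∀ k, ⟪sk k, xb⟫ ≤ 0 := fun k => hskle k xb hxbK
  have hskxb_lb : ∀ k : ℕ, -(1 / ((k : ℝ) + 1)) ≤ ⟪sk k, xb⟫ := by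
    intro k
    have h2 : ⟪sk k, xb⟫ = ⟪sk k, xb - π k⟫ := by
      rw [inner_sub_right, hskpi k, sub_zero]
    have h3 : |⟪sk k, xb - π k⟫| ≤ ‖sk k‖ * ‖xb - π k‖ := abs_real_inner_le_norm _ _
    rw [hsknorm k, one_mul] at h3
    have h4 := hlip k
    have h5 : ‖xb - v k‖ < 1 / ((k : ℝ) + 1) := by
      rw [norm_sub_rev]; exact hvd k
    have h6 := abs_le.1 h3
    rw [h2]
    linarith [h6.1]
  -- pass to a converging subsequence of the unit vectors sk
  have hsphere : ∀ k, sk k ∈ Metric.sphere (0 : EuclideanSpace ℝ (Fin n)) 1 := by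
    intro k
    rw [mem_sphere_zero_iff_norm]
    exact hsknorm k
  obtain ⟨s, hs_sph, φ, hφ, hlim⟩ := (isCompact_sphere (0 : EuclideanSpace ℝ (Fin n)) 1).tendsto_subseq hsphere
  have hsnorm : ‖s‖ = 1 := mem_sphere_zero_iff_norm.1 hs_sph
  have hsle : ∀ x ∈ K, ⟪s, x⟫ ≤ 0 := by
    intro x hx
    have hcont : Filter.Tendsto (fun k => ⟪(sk ∘ φ) k, x⟫) Filter.atTop (nhds ⟪s, x⟫) :=
      hlim.inner tendsto_const_nhds
    exact le_of_tendsto hcont (Filter.Eventually.of_forall fun k => hskle (φ k) x hx)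
  have hsxb : ⟪s, xb⟫ = 0 := by
    have hcont : Filter.Tendsto (fun k => ⟪(sk ∘ φ) k, xb⟫) Filter.atTop (nhds ⟪s, xb⟫) :=
      hlim.inner tendsto_const_nhds
    have hub : ⟪s, xb⟫ ≤ 0 :=
      le_of_tendsto hcont (Filter.Eventually.of_forall fun k => hskxb_ub (φ k))
    have hzlim : Filter.Tendsto (fun k : ℕ => -(1 / ((k : ℝ) + 1))) Filter.atTop (nhds 0) := by
      have := (tendsto_one_div_add_atTop_nhds_zero_nat :
        Filter.Tendsto (fun k : ℕ => 1 / ((k : ℝ) + 1)) Filter.atTop (nhds 0)).neg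
      simpa using this
    have hlb : (0 : ℝ) ≤ ⟪s, xb⟫ := by
      refine le_of_tendsto_of_tendsto hzlim hcont (Filter.Eventually.of_forall fun k => ?_)
      have hstep : -(1 / ((k : ℝ) + 1)) ≤ -(1 / ((φ k : ℝ) + 1)) := by
        have hkk : k ≤ φ k := hφ.le_apply
        have hle' : (k : ℝ) + 1 ≤ (φ k : ℝ) + 1 := by
          have hc : (k : ℝ) ≤ (φ k : ℝ) := by exact_mod_cast hkk
          linarith
        have hpos : (0 : ℝ) < (k : ℝ) + 1 := by positivity
        have := one_div_le_one_div_of_le hpos hle'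
        linarith
      exact le_trans hstep (hskxb_lb (φ k))
    linarith
  -- s is orthogonal to all of E
  have hsE : ∀ e ∈ E, ⟪s, e⟫ = 0 := by
    intro e he
    have hle : ⟪s, e⟫ ≤ 0 := hsle e (hEK he)
    by_cases hcase : e = xb
    · rw [hcase]; exact hsxb
    obtain ⟨ye, hye, hyecoe⟩ := mem_intrinsicInterior.1 hxbi
    obtain ⟨ε, hεpos, hball⟩ := Metric.mem_nhds_iff.1 (mem_interior_iff_mem_nhds.1 hye)
    have hd0 : (0 : ℝ) < ‖xb - e‖ := by
      rw [norm_pos_iff, sub_ne_zero]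
      exact fun h => hcase h.symm
    set δ : ℝ := ε / (2 * ‖xb - e‖) with hδ
    have hδpos : 0 < δ := by positivity
    set p : EuclideanSpace ℝ (Fin n) := δ • (xb - e) + xb with hp
    have hpaff : p ∈ affineSpan ℝ E := by
      have h1 := subset_affineSpan ℝ E hxbE
      have h2 := subset_affineSpan ℝ E he
      have h3 := AffineSubspace.smul_vsub_vadd_mem (affineSpan ℝ E) δ h1 h2 h1
      simpa [vsub_eq_sub, vadd_eq_add, hp] using h3
    have hpE : p ∈ E := by
      have hmem : (⟨p, hpaff⟩ : affineSpan ℝ E) ∈ Metric.ball ye ε := by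
        rw [Metric.mem_ball, Subtype.dist_eq, hyecoe, dist_eq_norm]
        have e1 : p - xb = δ • (xb - e) := by rw [hp]; abel
        rw [e1, norm_smul, Real.norm_eq_abs, abs_of_pos hδpos]
        have hne' : ‖xb - e‖ ≠ 0 := ne_of_gt hd0
        have hval : δ * ‖xb - e‖ = ε / 2 := by
          rw [hδ]
          field_simp
        have hval2 : ‖xb - e‖ * δ = ε / 2 := by rw [mul_comm]; exact hval
        linarith [hval, hval2, hεpos]
      exact hball hmem
    have hge : 0 ≤ ⟪s, e⟫ := by
      have hpK := hEK hpE
      have h := hsle p hpK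
      rw [hp, inner_add_right, real_inner_smul_right, inner_sub_right, hsxb] at h
      nlinarith
    linarith
  -- apply the key lemma to ±s
  have hsF : s ∈ F :=
    lemW hEne hEcl hEconv hFne hFcl hFconv hsum horth h0F hpair s hsE
  have hsF' : -s ∈ F :=
    lemW hEne hEcl hEconv hFne hFcl hFconv hsum horth h0F hpair (-s)
      (fun e he => by rw [inner_neg_left, hsE e he, neg_zero])
  have hsK : ∀ x ∈ K, ⟪s, x⟫ = 0 := by
    intro x hx
    have h1 : ⟪x, s⟫ ≤ 0 := hx s hsF
    have h2 : ⟪x, -s⟫ ≤ 0 := hx (-s) hsF'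
    rw [inner_neg_right] at h2
    rw [real_inner_comm]
    linarith
  -- s is orthogonal to the affine span of K
  have hsaff : ∀ x ∈ (affineSpan ℝ K : Set (EuclideanSpace ℝ (Fin n))), ⟪s, x⟫ = 0 := by
    set M : Submodule ℝ (EuclideanSpace ℝ (Fin n)) :=
      { carrier := {x | ⟪s, x⟫ = 0}
        add_mem' := by
          intro a b ha hb
          simp only [Set.mem_setOf_eq, inner_add_right] at *
          rw [ha, hb]; ring
        zero_mem' := by simp
        smul_mem' := by
          intro c a ha
          simp only [Set.mem_setOf_eq, real_inner_smul_right] at *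
          rw [ha]; ring } with hM
    have hle : affineSpan ℝ K ≤ M.toAffineSubspace := by
      rw [affineSpan_le]
      intro x hx
      exact hsK x hx
    intro x hx
    exact Submodule.mem_toAffineSubspace.1 (hle hx)
  -- final contradiction
  have hzero : ∀ k, ⟪s, (sk ∘ φ) k⟫ = 0 := by
    intro k
    have h1 : ⟪s, v (φ k)⟫ = 0 := hsaff _ (hvA (φ k))
    have h2 : ⟪s, π (φ k)⟫ = 0 := hsK _ (hπ (φ k)).1
    simp only [Function.comp_apply, hsk, real_inner_smul_right, inner_sub_right, h1, h2]
    ring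
  have hcont : Filter.Tendsto (fun k => ⟪s, (sk ∘ φ) k⟫) Filter.atTop (nhds ⟪s, s⟫) :=
    tendsto_const_nhds.inner hlim
  have hss : ⟪s, s⟫ = 0 := by
    have hconst : (fun k => ⟪s, (sk ∘ φ) k⟫) = fun _ => (0 : ℝ) := funext hzero
    rw [hconst] at hcont
    exact tendsto_nhds_unique hcont tendsto_const_nhds
  rw [real_inner_self_eq_norm_sq, hsnorm] at hss
  norm_num at hss

end NotSubsetRbdAux

theorem not_subset_relative_boundary_of_polar
(n : ℕ) (E F : Set (EuclideanSpace ℝ (Fin n)))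
    (hEne : E.Nonempty) (hEcl : IsClosed E) (hEconv : Convex ℝ E)
    (hFne : F.Nonempty) (hFcl : IsClosed F) (hFconv : Convex ℝ F)
    (hsum : E + F = Set.univ)
    (horth : ∀ u y z : EuclideanSpace ℝ (Fin n),
      IsMetricProj E u y → IsMetricProj F u z → ⟪y, z⟫ = 0) :
    ¬ E ⊆ intrinsicFrontier ℝ (polarSet F) ∧
      ¬ F ⊆ intrinsicFrontier ℝ (polarSet E) := by
  constructor
  · exact NotSubsetRbdAux.main hEne hEcl hEconv hFne hFcl hFconv hsum horth
  · refine NotSubsetRbdAux.main hFne hFcl hFconv hEne hEcl hEconv ?_ ?_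
    · rw [add_comm]; exact hsum
    · intro u y z h1 h2
      rw [real_inner_comm]
      exact horth u z y h2 h1
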